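/- Let M be a rank-r lattice path matroid with r ≥ 3. If M is vertically 3-connected, then M has a minor isomorphic to the uniform matroid U_{r,r+2}. -/

import Mathlib

open Set Matroid

variable {α : Type*}

/-- `N` is a transversal presentation of the matroid `M`: the independent sets of `M` are
exactly the partial transversals of the family `N`, i.e. the subsets of the ground set
admitting an injection `φ` into the index set with `x ∈ N (φ x)` for all `x`. -/
def IsTransversalPresentation (M : Matroid α) {r : ℕ} (N : Fin r → Set α) : Prop :=
  (∀ i, N i ⊆ M.E) ∧
    ∀ I : Set α, M.Indep I ↔
      I ⊆ M.E ∧ ∃ φ : I → Fin r, Function.Injective φ ∧ ∀ x : I, (x : α) ∈ N (φ x)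

/-- A matroid is bicircular if it has a transversal presentation in which every set of the
presentation has at most two elements. -/
def Bicircular (M : Matroid α) : Prop :=
  ∃ (r : ℕ) (N : Fin r → Set α), IsTransversalPresentation M N ∧ ∀ i, (N i).encard ≤ 2

/-- `M` is a matroid on ground set `{1, …, m + r}` with a standard (lattice path)
presentation consisting of the intervals `[l i, u i]`, where the lower endpoints and the
upper endpoints each form strictly increasing chains. -/
def IsStandardPresentation (M : Matroid ℕ) (m : ℕ) {r : ℕ} (l u : Fin r → ℕ) : Prop :=
  M.E = Set.Icc 1 (m + r) ∧ StrictMono l ∧ StrictMono u ∧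
    (∀ i, 1 ≤ l i ∧ l i ≤ u i ∧ u i ≤ m + r) ∧
    IsTransversalPresentation M (fun i => Set.Icc (l i) (u i))

/-- A matroid is a lattice path matroid if it is isomorphic (via a bijection `g` of ground
sets) to a transversal matroid on `{1, …, m + r}` whose presentation consists of intervals
`[l i, u i]` with both endpoint sequences strictly increasing. -/
def LatticePath (M : Matroid α) : Prop :=
  ∃ (r m : ℕ) (g : ℕ → α) (l u : Fin r → ℕ),
    Set.InjOn g (Set.Icc 1 (m + r)) ∧ g '' Set.Icc 1 (m + r) = M.E ∧
    StrictMono l ∧ StrictMono u ∧ (∀ i, 1 ≤ l i ∧ l i ≤ u i ∧ u i ≤ m + r) ∧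
    IsTransversalPresentation M (fun i => g '' Set.Icc (l i) (u i))

/-- The class of matroids that are both bicircular and lattice path. -/
def BicircLP (M : Matroid α) : Prop := Bicircular M ∧ LatticePath M

/-- Deletion of the set `D` from the matroid `M`. -/
def MDel (M : Matroid α) (D : Set α) : Matroid α := M ↾ (M.E \ D)

/-- Contraction of the set `C` in the matroid `M`. -/
def MCon (M : Matroid α) (C : Set α) : Matroid α := (M✶ ↾ (M.E \ C))✶

/-- `N` is a minor of `M`: it is obtained from `M` by contracting a set and deleting a set. -/
def IsMinorOf (N M : Matroid α) : Prop :=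
  ∃ C D : Set α, C ⊆ M.E ∧ D ⊆ M.E ∧ Disjoint C D ∧ N = MDel (MCon M C) D

/-- `N` is a proper minor of `M`: a minor on a proper subset of the ground set. -/
def IsProperMinorOf (N M : Matroid α) : Prop := IsMinorOf N M ∧ N.E ⊂ M.E

/-- `M` is an excluded minor for the class `𝒞`: `M` is not in `𝒞`, but every proper minor
of `M` is in `𝒞`. -/
def IsExcludedMinor (𝒞 : Matroid α → Prop) (M : Matroid α) : Prop :=
  ¬ 𝒞 M ∧ ∀ N : Matroid α, IsProperMinorOf N M → 𝒞 N

/-- The rank of the set `X` in `M`: the supremum of the cardinalities of independent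
subsets of `X`. -/
noncomputable def eRk₀ (M : Matroid α) (X : Set α) : ℕ∞ :=
  ⨆ I : {I : Set α // M.Indep I ∧ I ⊆ X}, (I : Set α).encard

/-- The rank of the matroid `M`. -/
noncomputable def eRank₀ (M : Matroid α) : ℕ∞ := eRk₀ M M.E

/-- `M` is vertically 3-connected: it has no vertical `k`-separation for `k < 3`, i.e. no
partition `(A, B)` of the ground set with `|A| ≥ k`, `|B| ≥ k`, `r A ≥ k`, `r B ≥ k` and
`r A + r B - r M < k`. -/
def VerticallyThreeConnected (M : Matroid α) : Prop :=
  ∀ k : ℕ, 0 < k → k < 3 → ∀ A B : Set α, A ∪ B = M.E → Disjoint A B →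
    ¬ ((k : ℕ∞) ≤ A.encard ∧ (k : ℕ∞) ≤ B.encard ∧ (k : ℕ∞) ≤ eRk₀ M A ∧
        (k : ℕ∞) ≤ eRk₀ M B ∧ eRk₀ M A + eRk₀ M B < eRank₀ M + (k : ℕ∞))

/-- A circuit of a matroid: a minimal dependent set. -/
def IsCircuit (M : Matroid α) (C : Set α) : Prop :=
  M.Dep C ∧ ∀ D : Set α, D ⊂ C → M.Indep D

/-- `P` is a parallel class of `M`: a maximal set of pairwise parallel non-loop elements. -/
def IsParallelClass (M : Matroid α) (P : Set α) : Prop :=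
  P.Nonempty ∧ P ⊆ M.E ∧ (∀ a ∈ P, M.Indep {a}) ∧
    (∀ a ∈ P, ∀ b ∈ P, a ≠ b → ¬ M.Indep {a, b}) ∧
    ∀ c ∈ M.E, M.Indep {c} → (∀ a ∈ P, a ≠ c → ¬ M.Indep {a, c}) → c ∈ P

/-- `M` is isomorphic to the uniform matroid `U_{a,b}`: its ground set has `b` elements and
its independent sets are the subsets of the ground set with at most `a` elements. -/
def IsUnifIso (a b : ℕ) (M : Matroid α) : Prop :=
  M.E.encard = (b : ℕ∞) ∧ ∀ I : Set α, M.Indep I ↔ I ⊆ M.E ∧ I.encard ≤ (a : ℕ∞)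

/-- `M` is the direct sum of `M₁` and `M₂` (which have disjoint ground sets). -/
def IsDirectSumOf (M M₁ M₂ : Matroid α) : Prop :=
  Disjoint M₁.E M₂.E ∧ M.E = M₁.E ∪ M₂.E ∧
    ∀ I : Set α, M.Indep I ↔ I ⊆ M.E ∧ M₁.Indep (I ∩ M₁.E) ∧ M₂.Indep (I ∩ M₂.E)

/-- `M` is the truncation `T_n(M₀)` to rank `n` of the matroid `M₀` (of rank at least `n`):
its independent sets are the independent sets of `M₀` with at most `n` elements. -/
def IsTruncationOf (n : ℕ) (M₀ M : Matroid α) : Prop :=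
  (n : ℕ∞) ≤ eRank₀ M₀ ∧ M.E = M₀.E ∧
    ∀ I : Set α, M.Indep I ↔ M₀.Indep I ∧ I.encard ≤ (n : ℕ∞)

/-- `M` is the free extension `M₀ + x` of `M₀` by the new element `x`: its independent sets
are the independent sets `I` of `M₀`, together with the sets `I ∪ {x}` for `I` independent
in `M₀` with `|I| ≤ r(M₀) - 1`. -/
def IsFreeExtOf (M₀ M : Matroid α) (x : α) : Prop :=
  x ∉ M₀.E ∧ M.E = insert x M₀.E ∧
    ∀ I : Set α, M.Indep I ↔
      ((x ∉ I ∧ M₀.Indep I) ∨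
        (x ∈ I ∧ M₀.Indep (I \ {x}) ∧ (I \ {x}).encard + 1 ≤ eRank₀ M₀))

/-- `M` is isomorphic to `T_3(U_{1,2} ⊕ U_{3,5})`. -/
def IsT3U12U35 (M : Matroid α) : Prop :=
  ∃ M₁ M₂ M₀ : Matroid α, IsUnifIso 1 2 M₁ ∧ IsUnifIso 3 5 M₂ ∧ IsDirectSumOf M₀ M₁ M₂ ∧
    IsTruncationOf 3 M₀ M

/-- `M` is isomorphic to `T_3(U_{1,2} ⊕ U_{1,2} ⊕ U_{3,3})`. -/
def IsT3U12U12U33 (M : Matroid α) : Prop :=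
  ∃ M₁ M₂ M₃ M₁₂ M₀ : Matroid α, IsUnifIso 1 2 M₁ ∧ IsUnifIso 1 2 M₂ ∧ IsUnifIso 3 3 M₃ ∧
    IsDirectSumOf M₁₂ M₁ M₂ ∧ IsDirectSumOf M₀ M₁₂ M₃ ∧ IsTruncationOf 3 M₀ M

/-- `M` is isomorphic to `T_4(U_{1,2} ⊕ U_{4,5})`. -/
def IsT4U12U45 (M : Matroid α) : Prop :=
  ∃ M₁ M₂ M₀ : Matroid α, IsUnifIso 1 2 M₁ ∧ IsUnifIso 4 5 M₂ ∧ IsDirectSumOf M₀ M₁ M₂ ∧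
    IsTruncationOf 4 M₀ M

/-- `M` is isomorphic to `T_4(U_{3,4} ⊕ U_{3,3})`. -/
def IsT4U34U33 (M : Matroid α) : Prop :=
  ∃ M₁ M₂ M₀ : Matroid α, IsUnifIso 3 4 M₁ ∧ IsUnifIso 3 3 M₂ ∧ IsDirectSumOf M₀ M₁ M₂ ∧
    IsTruncationOf 4 M₀ M

/-- `M` is isomorphic to `P_n = T_n(U_{n-1,n} ⊕ U_{n-1,n})`. -/
def IsP (n : ℕ) (M : Matroid α) : Prop :=
  ∃ M₁ M₂ M₀ : Matroid α, IsUnifIso (n - 1) n M₁ ∧ IsUnifIso (n - 1) n M₂ ∧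
    IsDirectSumOf M₀ M₁ M₂ ∧ IsTruncationOf n M₀ M

/-- `M` is isomorphic to `P_n' = (P_{n-1}✶ + e)✶`, the free coextension of `P_{n-1}`. -/
def IsP' (n : ℕ) (M : Matroid α) : Prop :=
  ∃ (N : Matroid α) (e : α), IsP (n - 1) N ∧ IsFreeExtOf N✶ M✶ e

/-- `M` is isomorphic to `A_n = P_n' + x`. -/
def IsA (n : ℕ) (M : Matroid α) : Prop :=
  ∃ (N : Matroid α) (x : α), IsP' n N ∧ IsFreeExtOf N M x

/-- `M` is isomorphic to `B_{n,k} = T_n(U_{n-1,n} ⊕ U_{n-1,n} ⊕ U_{k-1,k})`. -/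
def IsB (n k : ℕ) (M : Matroid α) : Prop :=
  ∃ M₁ M₂ M₃ M₁₂ M₀ : Matroid α, IsUnifIso (n - 1) n M₁ ∧ IsUnifIso (n - 1) n M₂ ∧
    IsUnifIso (k - 1) k M₃ ∧ IsDirectSumOf M₁₂ M₁ M₂ ∧ IsDirectSumOf M₀ M₁₂ M₃ ∧
    IsTruncationOf n M₀ M

/-- `M` is isomorphic to `C_{n+k,k} = B_{n,k}✶`. -/
def IsC (n k : ℕ) (M : Matroid α) : Prop := IsB n k M✶

/-- `M` is isomorphic to `D_n = (P_{n-1} ⊕ U_{1,1}) + x`. -/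
def IsD (n : ℕ) (M : Matroid α) : Prop :=
  ∃ (P U S : Matroid α) (x : α), IsP (n - 1) P ∧ IsUnifIso 1 1 U ∧ IsDirectSumOf S P U ∧
    IsFreeExtOf S M x

/-- `M` is isomorphic to `E_n = D_n✶`. -/
def IsE (n : ℕ) (M : Matroid α) : Prop := IsD n M✶

/-- `M` is isomorphic to the rank-3 whirl `𝒲³`, the transversal matroid on `{1, …, 6}` with
presentation `({1,3,4}, {1,2,5}, {2,3,6})`. -/
def IsWhirl3 (M : Matroid α) : Prop :=
  ∃ g : ℕ → α, Set.InjOn g (Set.Icc 1 6) ∧ g '' Set.Icc 1 6 = M.E ∧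
    IsTransversalPresentation M ![g '' {1, 3, 4}, g '' {1, 2, 5}, g '' {2, 3, 6}]

/-- `M` is isomorphic to `R₃`, the transversal matroid on `{1, …, 7}` with presentation
`({1,2}, {1,3,4,5}, {2,3,6,7})`. -/
def IsR3 (M : Matroid α) : Prop :=
  ∃ g : ℕ → α, Set.InjOn g (Set.Icc 1 7) ∧ g '' Set.Icc 1 7 = M.E ∧
    IsTransversalPresentation M ![g '' {1, 2}, g '' {1, 3, 4, 5}, g '' {2, 3, 6, 7}]

/-- `M` is isomorphic to `R₄`, the transversal matroid on `{1, …, 7}` with presentation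
`({1,2}, {1,3,4,5}, {2,3,6,7}, {6,7})`. -/
def IsR4 (M : Matroid α) : Prop :=
  ∃ g : ℕ → α, Set.InjOn g (Set.Icc 1 7) ∧ g '' Set.Icc 1 7 = M.E ∧
    IsTransversalPresentation M
      ![g '' {1, 2}, g '' {1, 3, 4, 5}, g '' {2, 3, 6, 7}, g '' {6, 7}]

/-- `M` is isomorphic to the rank-3 wheel `𝒲₃`, the cycle matroid of `K₄`: the elements
correspond bijectively to the edges of the complete graph on four vertices, and a set is
independent if and only if the corresponding edge set is acyclic. -/
def IsWheel3 (M : Matroid α) : Prop :=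
  ∃ f : α → Sym2 (Fin 4),
    Set.InjOn f M.E ∧ (∀ x ∈ M.E, ¬ (f x).IsDiag) ∧
    (∀ p : Sym2 (Fin 4), ¬ p.IsDiag → ∃ x ∈ M.E, f x = p) ∧
    ∀ I : Set α, M.Indep I ↔ I ⊆ M.E ∧ (SimpleGraph.fromEdgeSet (f '' I)).IsAcyclic

lemma encard_le_of_inj {β γ : Type*} {s : Set β} {t : Set γ} (f : s → t)
    (hf : Function.Injective f) : s.encard ≤ t.encard := by
  classical
  rcases s.eq_empty_or_nonempty with rfl | ⟨x0, hx0⟩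
  · simp
  · set F : β → γ := fun b => if h : b ∈ s then (f ⟨b, h⟩ : γ) else (f ⟨x0, hx0⟩ : γ) with hF
    have hinj : Set.InjOn F s := by
      intro a ha b hb hab
      simp only [hF, dif_pos ha, dif_pos hb] at hab
      have := hf (Subtype.coe_injective hab)
      exact congrArg Subtype.val this
    have hsub : F '' s ⊆ t := by
      rintro _ ⟨b, hb, rfl⟩
      simp only [hF, dif_pos hb]
      exact (f ⟨b, hb⟩).2
    calc s.encard = (F '' s).encard := (hinj.encard_image).symm
      _ ≤ t.encard := encard_mono hsub

lemma eRk_le_encard (M : Matroid α) (X : Set α) : eRk₀ M X ≤ X.encard :=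
  iSup_le fun I => encard_mono I.2.2

section Pres

variable {M : Matroid α} {r m : ℕ} {g : ℕ → α} {l u : Fin r → ℕ}

/-- independence of sets built from a partial SDR choice -/
lemma aux_indep (hg : InjOn g (Icc 1 (m + r))) (hgE : g '' Icc 1 (m + r) = M.E)
    (hbd : ∀ i, 1 ≤ l i ∧ l i ≤ u i ∧ u i ≤ m + r)
    (hpres : IsTransversalPresentation M (fun i => g '' Icc (l i) (u i)))
    (c : Fin r → ℕ) (S : Set (Fin r)) (hc : ∀ i ∈ S, c i ∈ Icc (l i) (u i))
    (hcinj : InjOn c S) : M.Indep (g '' (c '' S)) := by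
  rw [(hpres.2 _)]
  have hsub : ∀ i ∈ S, c i ∈ Icc 1 (m + r) := by
    intro i hi
    have h1 := (hc i hi).1; have h2 := (hc i hi).2
    have := hbd i
    exact ⟨by omega, by omega⟩
  constructor
  · rintro x ⟨y, ⟨i, hiS, rfl⟩, rfl⟩
    rw [← hgE]; exact ⟨c i, hsub i hiS, rfl⟩
  · have hx : ∀ x : ↥(g '' (c '' S)), ∃ i, i ∈ S ∧ g (c i) = ↑x := by
      rintro ⟨x, ⟨y, ⟨i, hi, rfl⟩, rfl⟩⟩; exact ⟨i, hi, rfl⟩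
    choose φ hφS hφx using hx
    refine ⟨φ, ?_, ?_⟩
    · intro x y hxy
      apply Subtype.ext; rw [← hφx x, ← hφx y, hxy]
    · intro x
      exact ⟨c (φ x), hc _ (hφS x), hφx x⟩

/-- cardinality bound for independent sets inside an image -/
lemma aux_card_le (hg : InjOn g (Icc 1 (m + r)))
    (hbd : ∀ i, 1 ≤ l i ∧ l i ≤ u i ∧ u i ≤ m + r)
    (hpres : IsTransversalPresentation M (fun i => g '' Icc (l i) (u i)))
    {I : Set α} (hI : M.Indep I) {T : Set ℕ} (hT : T ⊆ Icc 1 (m + r))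
    (hIT : I ⊆ g '' T) (S : Set (Fin r))
    (hS : ∀ i, (Icc (l i) (u i) ∩ T).Nonempty → i ∈ S) : I.encard ≤ S.encard := by
  obtain ⟨hIE, φ, hφinj, hφmem⟩ := (hpres.2 I).1 hI
  have hmem : ∀ x : I, φ x ∈ S := by
    intro x
    obtain ⟨y, hy, hyx⟩ := hφmem x
    obtain ⟨z, hz, hzx⟩ := hIT x.2
    have hy' : y ∈ Icc 1 (m + r) := by
      have := hbd (φ x); have h1 := hy.1; have h2 := hy.2
      exact ⟨by omega, by omega⟩
    have : y = z := hg hy' (hT hz) (by rw [hyx, hzx])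
    exact hS (φ x) ⟨y, hy, this ▸ hz⟩
  exact encard_le_of_inj (fun x => (⟨φ x, hmem x⟩ : S))
    (fun x y hxy => hφinj (by simpa using congrArg Subtype.val hxy))

end Pres

section Pres2

variable {M : Matroid α} {r m : ℕ} {g : ℕ → α} {l u : Fin r → ℕ}

lemma aux_eRk_prefix (hg : InjOn g (Icc 1 (m + r))) (hgE : g '' Icc 1 (m + r) = M.E)
    (hl : StrictMono l)
    (hbd : ∀ i, 1 ≤ l i ∧ l i ≤ u i ∧ u i ≤ m + r)
    (hpres : IsTransversalPresentation M (fun i => g '' Icc (l i) (u i)))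
    (t : ℕ) (ht : t ≤ m + r) :
    eRk₀ M (g '' Icc 1 t) = {i : Fin r | l i ≤ t}.encard := by
  apply le_antisymm
  · apply iSup_le
    rintro ⟨I, hI, hIsub⟩
    exact aux_card_le hg hbd hpres hI (Icc_subset_Icc le_rfl ht) hIsub _
      (fun i ⟨x, hx1, hx2⟩ => le_trans hx1.1 hx2.2)
  · set S : Set (Fin r) := {i : Fin r | l i ≤ t} with hS
    have hlS : l '' S ⊆ Icc 1 t := by
      rintro _ ⟨i, hi, rfl⟩; exact ⟨(hbd i).1, hi⟩
    have hlS' : l '' S ⊆ Icc 1 (m + r) := hlS.trans (Icc_subset_Icc le_rfl ht)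
    have hind : M.Indep (g '' (l '' S)) :=
      aux_indep hg hgE hbd hpres l S (fun i _ => ⟨le_rfl, (hbd i).2.1⟩) (hl.injective.injOn)
    refine le_iSup_of_le ⟨g '' (l '' S), hind, image_mono hlS⟩ ?_
    rw [(hg.mono hlS').encard_image, (hl.injective.injOn).encard_image]

lemma aux_eRk_suffix (hg : InjOn g (Icc 1 (m + r))) (hgE : g '' Icc 1 (m + r) = M.E)
    (hu : StrictMono u)
    (hbd : ∀ i, 1 ≤ l i ∧ l i ≤ u i ∧ u i ≤ m + r)
    (hpres : IsTransversalPresentation M (fun i => g '' Icc (l i) (u i)))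
    (t : ℕ) :
    eRk₀ M (g '' Icc (t + 1) (m + r)) = {i : Fin r | t + 1 ≤ u i}.encard := by
  apply le_antisymm
  · apply iSup_le
    rintro ⟨I, hI, hIsub⟩
    exact aux_card_le hg hbd hpres hI (Icc_subset_Icc (by omega) le_rfl) hIsub _
      (fun i ⟨x, hx1, hx2⟩ => le_trans hx2.1 hx1.2)
  · set S : Set (Fin r) := {i : Fin r | t + 1 ≤ u i} with hS
    have huS : u '' S ⊆ Icc (t + 1) (m + r) := by
      rintro _ ⟨i, hi, rfl⟩; exact ⟨hi, (hbd i).2.2⟩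
    have huS' : u '' S ⊆ Icc 1 (m + r) := by
      rintro _ ⟨i, hi, rfl⟩; exact ⟨by have := (hbd i).1; have := (hbd i).2.1; omega, (hbd i).2.2⟩
    have hind : M.Indep (g '' (u '' S)) :=
      aux_indep hg hgE hbd hpres u S (fun i _ => ⟨(hbd i).2.1, le_rfl⟩) (hu.injective.injOn)
    refine le_iSup_of_le ⟨g '' (u '' S), hind, image_mono huS⟩ ?_
    rw [(hg.mono huS').encard_image, (hu.injective.injOn).encard_image]

lemma aux_eRank (hg : InjOn g (Icc 1 (m + r))) (hgE : g '' Icc 1 (m + r) = M.E)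
    (hl : StrictMono l)
    (hbd : ∀ i, 1 ≤ l i ∧ l i ≤ u i ∧ u i ≤ m + r)
    (hpres : IsTransversalPresentation M (fun i => g '' Icc (l i) (u i))) :
    eRank₀ M = (r : ℕ∞) := by
  have h1 : eRank₀ M = eRk₀ M (g '' Icc 1 (m + r)) := by rw [eRank₀, hgE]
  rw [h1, aux_eRk_prefix hg hgE hl hbd hpres (m + r) le_rfl]
  have : {i : Fin r | l i ≤ m + r} = (univ : Set (Fin r)) := by
    ext i; simpa using (hbd i).2.1.trans (hbd i).2.2
  rw [this, encard_univ]
  simp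

end Pres2


section Pres3

variable {M : Matroid α} {r m : ℕ} {g : ℕ → α} {l u : Fin r → ℕ}

lemma card_le_fin (n : ℕ) (hn : n < r) : {i : Fin r | (i : ℕ) ≤ n}.encard = ((n + 1 : ℕ) : ℕ∞) := by
  have : {i : Fin r | (i : ℕ) ≤ n} = ↑(Finset.Iic (⟨n, hn⟩ : Fin r)) := by
    ext i; simp [Fin.le_def]
  rw [this, encard_coe_eq_coe_finsetCard, Fin.card_Iic]

lemma card_ge_fin (n : ℕ) (hn : n < r) : {i : Fin r | n ≤ (i : ℕ)}.encard = ((r - n : ℕ) : ℕ∞) := by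
  have : {i : Fin r | n ≤ (i : ℕ)} = ↑(Finset.Ici (⟨n, hn⟩ : Fin r)) := by
    ext i; simp [Fin.le_def]
  rw [this, encard_coe_eq_coe_finsetCard, Fin.card_Ici]

lemma aux_cut (hg : InjOn g (Icc 1 (m + r))) (hgE : g '' Icc 1 (m + r) = M.E)
    (hl : StrictMono l) (hu : StrictMono u)
    (hbd : ∀ i, 1 ≤ l i ∧ l i ≤ u i ∧ u i ≤ m + r)
    (hpres : IsTransversalPresentation M (fun i => g '' Icc (l i) (u i)))
    (h3 : VerticallyThreeConnected M)
    (t a b k : ℕ) (ht1 : 1 ≤ t) (ht2 : t < m + r)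
    (ha : {i : Fin r | l i ≤ t}.encard = (a : ℕ∞))
    (hb : {i : Fin r | t + 1 ≤ u i}.encard = (b : ℕ∞))
    (hk1 : 0 < k) (hk3 : k < 3) (hka : k ≤ a) (hkb : k ≤ b)
    (hab : a + b < r + k) : False := by
  set A := g '' Icc 1 t with hA
  set B := g '' Icc (t + 1) (m + r) with hB
  have hAr : eRk₀ M A = (a : ℕ∞) := by
    rw [hA, aux_eRk_prefix hg hgE hl hbd hpres t (le_of_lt ht2), ha]
  have hBr : eRk₀ M B = (b : ℕ∞) := by
    rw [hB, aux_eRk_suffix hg hgE hu hbd hpres t, hb]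
  have hU : A ∪ B = M.E := by
    have hicc : Icc 1 t ∪ Icc (t + 1) (m + r) = Icc 1 (m + r) := by
      ext x; simp only [mem_union, mem_Icc]; omega
    rw [hA, hB, ← image_union, hicc, hgE]
  have hD : Disjoint A B := by
    rw [Set.disjoint_left]
    rintro x ⟨y1, hy1, rfl⟩ ⟨y2, hy2, hxy⟩
    have h1 : y1 ∈ Icc 1 (m + r) := ⟨hy1.1, hy1.2.trans (le_of_lt ht2)⟩
    have h2 : y2 ∈ Icc 1 (m + r) := ⟨by have := hy2.1; omega, hy2.2⟩
    have := hg h2 h1 hxy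
    have := hy1.2; have := hy2.1; omega
  apply h3 k hk1 hk3 A B hU hD
  have hrank : eRank₀ M = (r : ℕ∞) := aux_eRank hg hgE hl hbd hpres
  refine ⟨?_, ?_, ?_, ?_, ?_⟩
  · exact le_trans (by rw [hAr]; exact_mod_cast hka) (_root_.eRk_le_encard M A)
  · exact le_trans (by rw [hBr]; exact_mod_cast hkb) (_root_.eRk_le_encard M B)
  · rw [hAr]; exact_mod_cast hka
  · rw [hBr]; exact_mod_cast hkb
  · rw [hAr, hBr, hrank]
    exact_mod_cast hab

end Pres3

section Pres4

variable {M : Matroid α} {r m : ℕ} {g : ℕ → α} {l u : Fin r → ℕ}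

lemma aux_lge (hl : StrictMono l) (hbd : ∀ i, 1 ≤ l i ∧ l i ≤ u i ∧ u i ≤ m + r) :
    ∀ n, ∀ hn : n < r, n + 1 ≤ l ⟨n, hn⟩ := by
  intro n
  induction n with
  | zero => intro hn; exact (hbd ⟨0, hn⟩).1
  | succ k ih =>
    intro hn
    have hk : k < r := by omega
    have h1 := ih hk
    have h2 : l ⟨k, hk⟩ < l ⟨k + 1, hn⟩ := hl (by simp [Fin.lt_def])
    omega

lemma aux_C2 (hg : InjOn g (Icc 1 (m + r))) (hgE : g '' Icc 1 (m + r) = M.E)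
    (hl : StrictMono l) (hu : StrictMono u)
    (hbd : ∀ i, 1 ≤ l i ∧ l i ≤ u i ∧ u i ≤ m + r)
    (hpres : IsTransversalPresentation M (fun i => g '' Icc (l i) (u i)))
    (h3 : VerticallyThreeConnected M) (hr : 3 ≤ r)
    (j : Fin r) (hj : (j : ℕ) + 1 < r) : l ⟨(j : ℕ) + 1, hj⟩ + 1 ≤ u j := by
  by_contra hcon
  push_neg at hcon
  set J := (j : ℕ) with hJ
  set js : Fin r := ⟨J + 1, hj⟩ with hjs
  have hjlt : j < js := by simp [Fin.lt_def, hjs]; omega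
  have hLge : J + 2 ≤ l js := aux_lge hl hbd (J + 1) hj
  have hUjs : u js ≤ m + r := (hbd js).2.2
  have hLle : l js ≤ u js := (hbd js).2.1
  have huj : u j < u js := hu hjlt
  have hujls : u j ≤ l js := by omega
  rcases lt_or_eq_of_le hujls with hlt | heq
  · -- u j < l js : use t = l js - 1, k = 1
    refine aux_cut hg hgE hl hu hbd hpres h3 (l js - 1) (J + 1) (r - (J + 1)) 1
      (by omega) (by omega) ?_ ?_ (by omega) (by omega) (by omega) (by omega) (by omega)
    · have hset : {i : Fin r | l i ≤ l js - 1} = {i : Fin r | (i : ℕ) ≤ J} := by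
        ext i
        simp only [mem_setOf_eq]
        constructor
        · intro h
          by_contra hc
          push_neg at hc
          have hle : js ≤ i := by rw [Fin.le_def]; simpa [hjs] using hc
          have := hl.monotone hle
          omega
        · intro h
          have hle : i < js := by rw [Fin.lt_def]; simp [hjs]; omega
          have := hl hle
          omega
      rw [hset, card_le_fin J (by omega)]
    · have hset : {i : Fin r | (l js - 1) + 1 ≤ u i} = {i : Fin r | J + 1 ≤ (i : ℕ)} := by
        ext i
        simp only [mem_setOf_eq]
        constructor
        · intro h
          by_contra hc
          push_neg at hc
          have hle : i ≤ j := by rw [Fin.le_def]; omega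
          have := hu.monotone hle
          omega
        · intro h
          have hle : js ≤ i := by rw [Fin.le_def]; simpa [hjs] using h
          have := hu.monotone hle
          omega
      rw [hset, card_ge_fin (J + 1) (by omega)]
  · -- u j = l js
    by_cases hbig : J + 3 ≤ r
    · -- t = u j, k = 2
      refine aux_cut hg hgE hl hu hbd hpres h3 (u j) (J + 2) (r - (J + 1)) 2
        (by have := (hbd j).1; have := (hbd j).2.1; omega) (by omega) ?_ ?_
        (by omega) (by omega) (by omega) (by omega) (by omega)
      · have hset : {i : Fin r | l i ≤ u j} = {i : Fin r | (i : ℕ) ≤ J + 1} := by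
          ext i
          simp only [mem_setOf_eq]
          constructor
          · intro h
            by_contra hc
            push_neg at hc
            have hle : js < i := by rw [Fin.lt_def]; simpa [hjs] using hc
            have := hl hle
            omega
          · intro h
            have hle : i ≤ js := by rw [Fin.le_def]; simpa [hjs] using h
            have := hl.monotone hle
            omega
        rw [hset, card_le_fin (J + 1) (by omega)]
      · have hset : {i : Fin r | u j + 1 ≤ u i} = {i : Fin r | J + 1 ≤ (i : ℕ)} := by
          ext i
          simp only [mem_setOf_eq]
          constructor
          · intro h
            by_contra hc
            push_neg at hc
            have hle : i ≤ j := by rw [Fin.le_def]; omega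
            have := hu.monotone hle
            omega
          · intro h
            have hle : js ≤ i := by rw [Fin.le_def]; simpa [hjs] using h
            have := hu.monotone hle
            omega
        rw [hset, card_ge_fin (J + 1) (by omega)]
    · -- J = r - 2 ≥ 1 : t = u j - 1, k = 2
      refine aux_cut hg hgE hl hu hbd hpres h3 (u j - 1) (J + 1) (r - J) 2
        (by omega) (by omega) ?_ ?_ (by omega) (by omega) (by omega) (by omega) (by omega)
      · have hset : {i : Fin r | l i ≤ u j - 1} = {i : Fin r | (i : ℕ) ≤ J} := by
          ext i
          simp only [mem_setOf_eq]
          constructor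
          · intro h
            by_contra hc
            push_neg at hc
            have hle : js ≤ i := by rw [Fin.le_def]; simpa [hjs] using hc
            have := hl.monotone hle
            omega
          · intro h
            have hle : i < js := by rw [Fin.lt_def]; simp [hjs]; omega
            have := hl hle
            omega
        rw [hset, card_le_fin J (by omega)]
      · have hset : {i : Fin r | (u j - 1) + 1 ≤ u i} = {i : Fin r | J ≤ (i : ℕ)} := by
          ext i
          simp only [mem_setOf_eq]
          constructor
          · intro h
            by_contra hc
            push_neg at hc
            have hle : i < j := by rw [Fin.lt_def]; omega
            have := hu hle
            omega
          · intro h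
            have hle : j ≤ i := by rw [Fin.le_def]; omega
            have := hu.monotone hle
            omega
        rw [hset, card_ge_fin J (by omega)]

end Pres4

section Pres5

variable {M : Matroid α} {r m : ℕ} {g : ℕ → α} {l u : Fin r → ℕ}

lemma aux_C3 (hg : InjOn g (Icc 1 (m + r))) (hgE : g '' Icc 1 (m + r) = M.E)
    (hl : StrictMono l) (hu : StrictMono u)
    (hbd : ∀ i, 1 ≤ l i ∧ l i ≤ u i ∧ u i ≤ m + r)
    (hpres : IsTransversalPresentation M (fun i => g '' Icc (l i) (u i)))
    (h3 : VerticallyThreeConnected M) (hr : 3 ≤ r)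
    (j : Fin r) (hj : (j : ℕ) + 2 < r) : l ⟨(j : ℕ) + 2, hj⟩ ≤ u j := by
  by_contra hcon
  push_neg at hcon
  set J := (j : ℕ) with hJ
  have hj1 : J + 1 < r := by omega
  set js : Fin r := ⟨J + 1, hj1⟩ with hjs
  set js2 : Fin r := ⟨J + 2, hj⟩ with hjs2
  have hL2ge : J + 3 ≤ l js2 := aux_lge hl hbd (J + 2) hj
  have hLle2 : l js2 ≤ u js2 := (hbd js2).2.1
  have hU2 : u js2 ≤ m + r := (hbd js2).2.2
  have ha : {i : Fin r | l i ≤ l js2 - 1}.encard = ((J + 2 : ℕ) : ℕ∞) := by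
    have hset : {i : Fin r | l i ≤ l js2 - 1} = {i : Fin r | (i : ℕ) ≤ J + 1} := by
      ext i
      simp only [mem_setOf_eq]
      constructor
      · intro h
        by_contra hc
        push_neg at hc
        have hle : js2 ≤ i := by rw [Fin.le_def]; simp [hjs2]; omega
        have := hl.monotone hle
        omega
      · intro h
        have hle : i < js2 := by rw [Fin.lt_def]; simp [hjs2]; omega
        have := hl hle
        omega
    rw [hset, card_le_fin (J + 1) (by omega)]
  by_cases hcase : u js < l js2
  · -- k = 1
    refine aux_cut hg hgE hl hu hbd hpres h3 (l js2 - 1) (J + 2) (r - (J + 2)) 1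
      (by omega) (by omega) ha ?_ (by omega) (by omega) (by omega) (by omega) (by omega)
    have hset : {i : Fin r | (l js2 - 1) + 1 ≤ u i} = {i : Fin r | J + 2 ≤ (i : ℕ)} := by
      ext i
      simp only [mem_setOf_eq]
      constructor
      · intro h
        by_contra hc
        push_neg at hc
        have hle : i ≤ js := by rw [Fin.le_def]; simp [hjs]; omega
        have := hu.monotone hle
        have hule : u i ≤ u js := this
        omega
      · intro h
        have hle : js2 ≤ i := by rw [Fin.le_def]; simpa [hjs2] using h
        have := hu.monotone hle
        omega
    rw [hset, card_ge_fin (J + 2) (by omega)]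
  · -- u js ≥ l js2 : k = 2
    push_neg at hcase
    refine aux_cut hg hgE hl hu hbd hpres h3 (l js2 - 1) (J + 2) (r - (J + 1)) 2
      (by omega) (by omega) ha ?_ (by omega) (by omega) (by omega) (by omega) (by omega)
    have hset : {i : Fin r | (l js2 - 1) + 1 ≤ u i} = {i : Fin r | J + 1 ≤ (i : ℕ)} := by
      ext i
      simp only [mem_setOf_eq]
      constructor
      · intro h
        by_contra hc
        push_neg at hc
        have hle : i ≤ j := by rw [Fin.le_def]; omega
        have := hu.monotone hle
        omega
      · intro h
        have hle : js ≤ i := by rw [Fin.le_def]; simpa [hjs] using h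
        have := hu.monotone hle
        have : u js ≤ u i := this
        omega
    rw [hset, card_ge_fin (J + 1) (by omega)]

end Pres5





section Chain

variable {r : ℕ}

/-- the chain `l 0 < l 1 < ⋯ < l (r-1) < l (r-1) + 1 < l (r-1) + 2` -/
def chainE (l : Fin r → ℕ) (hr : r - 1 < r) : ℕ → ℕ :=
  fun s => l ⟨min s (r - 1), lt_of_le_of_lt (Nat.min_le_right _ _) hr⟩ + (s - (r - 1))

lemma chainE_eq (l : Fin r → ℕ) (hr : r - 1 < r) (i : Fin r) : chainE l hr (i : ℕ) = l i := by
  have h1 : (i : ℕ) - (r - 1) = 0 := by omega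
  have h2 : (⟨min (i : ℕ) (r - 1), lt_of_le_of_lt (Nat.min_le_right _ _) hr⟩ : Fin r) = i := by
    apply Fin.ext; simp only []; omega
  rw [chainE, h1, h2]; omega

lemma chainE_large (l : Fin r → ℕ) (hr : r - 1 < r) (s : ℕ) (hs : r - 1 ≤ s) :
    chainE l hr s = l ⟨r - 1, hr⟩ + (s - (r - 1)) := by
  have h2 : (⟨min s (r - 1), lt_of_le_of_lt (Nat.min_le_right _ _) hr⟩ : Fin r) =
      ⟨r - 1, hr⟩ := by
    apply Fin.ext; simp only []; omega
  rw [chainE, h2]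

lemma chainE_mono {l : Fin r → ℕ} (hl : StrictMono l) (hr : r - 1 < r) :
    StrictMono (chainE l hr) := by
  intro s s' hss
  by_cases h1 : s' ≤ r - 1
  · have hstrict : l ⟨min s (r - 1), lt_of_le_of_lt (Nat.min_le_right _ _) hr⟩ <
        l ⟨min s' (r - 1), lt_of_le_of_lt (Nat.min_le_right _ _) hr⟩ :=
      hl (by rw [Fin.lt_def]; simp only []; omega)
    simp only [chainE]
    omega
  · have hle : l ⟨min s (r - 1), lt_of_le_of_lt (Nat.min_le_right _ _) hr⟩ ≤
        l ⟨min s' (r - 1), lt_of_le_of_lt (Nat.min_le_right _ _) hr⟩ :=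
      hl.monotone (by rw [Fin.le_def]; simp only []; omega)
    simp only [chainE]
    omega

lemma chainE_pos {l : Fin r → ℕ} {u : Fin r → ℕ} {m : ℕ}
    (hbd : ∀ i, 1 ≤ l i ∧ l i ≤ u i ∧ u i ≤ m + r) (hr : r - 1 < r) (s : ℕ) :
    1 ≤ chainE l hr s :=
  le_trans (hbd _).1 (Nat.le_add_right _ _)

end Chain

section Final

variable {M : Matroid α} {r m : ℕ} {g : ℕ → α} {l u : Fin r → ℕ}

lemma aux_final (hg : InjOn g (Icc 1 (m + r))) (hgE : g '' Icc 1 (m + r) = M.E)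
    (hl : StrictMono l) (hu : StrictMono u)
    (hbd : ∀ i, 1 ≤ l i ∧ l i ≤ u i ∧ u i ≤ m + r)
    (hpres : IsTransversalPresentation M (fun i => g '' Icc (l i) (u i)))
    (h3 : VerticallyThreeConnected M) (hr : 3 ≤ r) :
    ∃ N : Matroid α, IsMinorOf N M ∧ IsUnifIso r (r + 2) N := by
  classical
  have hC2 := aux_C2 hg hgE hl hu hbd hpres h3 hr
  have hC3 := aux_C3 hg hgE hl hu hbd hpres h3 hr
  have hr0 : r - 1 < r := by omega
  have hmono := chainE_mono hl hr0
  -- key inequality at the top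
  have hprev : (r - 2 : ℕ) + 1 < r := by omega
  have hmk : (⟨(r - 2) + 1, hprev⟩ : Fin r) = ⟨r - 1, hr0⟩ := by apply Fin.ext; simp only []; omega
  have hKeyaux := hC2 ⟨r - 2, by omega⟩ hprev
  rw [hmk] at hKeyaux
  have hulast : u ⟨r - 2, by omega⟩ < u ⟨r - 1, hr0⟩ := hu (by rw [Fin.lt_def]; simp only []; omega)
  have hKey : l ⟨r - 1, hr0⟩ + 2 ≤ u ⟨r - 1, hr0⟩ := by omega
  -- F1
  have hF1 : ∀ (i : Fin r) (s : ℕ), (i : ℕ) ≤ s → l i ≤ chainE l hr0 s := by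
    intro i s h
    rw [← chainE_eq l hr0 i]
    exact hmono.monotone h
  -- F2
  have hF2 : ∀ (i : Fin r) (s : ℕ), s ≤ (i : ℕ) + 2 → s ≤ r + 1 → chainE l hr0 s ≤ u i := by
    intro i s h1 h2
    rcases (show s ≤ (i : ℕ) ∨ s = (i : ℕ) + 1 ∨ s = (i : ℕ) + 2 by omega) with h | h | h
    · calc chainE l hr0 s ≤ chainE l hr0 (i : ℕ) := hmono.monotone h
        _ = l i := chainE_eq l hr0 i
        _ ≤ u i := (hbd i).2.1
    · by_cases hs : s ≤ r - 1
      · have hi1 : (i : ℕ) + 1 < r := by omega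
        have he : chainE l hr0 s = l ⟨(i : ℕ) + 1, hi1⟩ := by
          rw [h, ← chainE_eq l hr0 ⟨(i : ℕ) + 1, hi1⟩]
        have := hC2 i hi1
        omega
      · -- s = r, i = r - 1
        have hsr : s = r := by omega
        have hir : (i : ℕ) = r - 1 := by omega
        have hie : i = ⟨r - 1, hr0⟩ := by apply Fin.ext; simp only [hir]
        have he : chainE l hr0 s = l ⟨r - 1, hr0⟩ + 1 := by
          rw [chainE_large l hr0 s (by omega)]; omega
        rw [he, hie]
        omega
    · by_cases hs : s ≤ r - 1
      · have hi2 : (i : ℕ) + 2 < r := by omega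
        have he : chainE l hr0 s = l ⟨(i : ℕ) + 2, hi2⟩ := by
          rw [h, ← chainE_eq l hr0 ⟨(i : ℕ) + 2, hi2⟩]
        have := hC3 i hi2
        omega
      · rcases (show s = r ∨ s = r + 1 by omega) with hsr | hsr
        · -- i = r - 2
          have hir : (i : ℕ) = r - 2 := by omega
          have hie : i = ⟨r - 2, by omega⟩ := by apply Fin.ext; simp only [hir]
          have he : chainE l hr0 s = l ⟨r - 1, hr0⟩ + 1 := by
            rw [chainE_large l hr0 s (by omega)]; omega
          rw [he, hie]
          omega
        · -- i = r - 1
          have hir : (i : ℕ) = r - 1 := by omega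
          have hie : i = ⟨r - 1, hr0⟩ := by apply Fin.ext; simp only [hir]
          have he : chainE l hr0 s = l ⟨r - 1, hr0⟩ + 2 := by
            rw [chainE_large l hr0 s (by omega)]; omega
          rw [he, hie]
          omega
  -- the ground set of the uniform minor
  set X : Set α := g '' (chainE l hr0 '' Iic (r + 1)) with hX
  have hchain_sub : chainE l hr0 '' Iic (r + 1) ⊆ Icc 1 (m + r) := by
    rintro _ ⟨s, hs, rfl⟩
    rw [mem_Iic] at hs
    refine ⟨chainE_pos hbd hr0 s, ?_⟩
    calc chainE l hr0 s ≤ chainE l hr0 (r + 1) := hmono.monotone hs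
      _ = l ⟨r - 1, hr0⟩ + 2 := by rw [chainE_large l hr0 (r + 1) (by omega)]; omega
      _ ≤ u ⟨r - 1, hr0⟩ := hKey
      _ ≤ m + r := (hbd _).2.2
  have hXE : X ⊆ M.E := by
    rw [hX, ← hgE]
    exact image_mono hchain_sub
  refine ⟨M ↾ X, ?_, ?_, ?_⟩
  · -- minor
    refine ⟨∅, M.E \ X, empty_subset _, diff_subset, disjoint_left.mpr (by simp), ?_⟩
    have h1 : MCon M ∅ = M := by
      rw [MCon, diff_empty, ← dual_ground, restrict_ground_eq_self, dual_dual]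
    rw [h1, MDel, Set.diff_diff_cancel_left hXE]
  · -- ground cardinality
    rw [Matroid.restrict_ground_eq, hX, (hg.mono hchain_sub).encard_image,
      (hmono.injective.injOn).encard_image]
    have : (Iic (r + 1) : Set ℕ) = ↑(Finset.range (r + 2)) := by
      ext x; simp [Nat.lt_succ_iff]
    rw [this, encard_coe_eq_coe_finsetCard, Finset.card_range]
  · -- independence
    intro I
    rw [Matroid.restrict_indep_iff, Matroid.restrict_ground_eq]
    constructor
    · rintro ⟨hIndep, hIX⟩
      refine ⟨hIX, ?_⟩
      obtain ⟨hIE, φ, hφinj, hφmem⟩ := (hpres.2 I).1 hIndep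
      calc I.encard ≤ (univ : Set (Fin r)).encard :=
            encard_le_of_inj (fun x => ⟨φ x, mem_univ _⟩)
              (fun x y hxy => hφinj (by simpa using congrArg Subtype.val hxy))
        _ = (r : ℕ∞) := by rw [encard_univ]; simp
    · rintro ⟨hIX, hIr⟩
      refine ⟨?_, hIX⟩
      rw [hpres.2]
      refine ⟨hIX.trans hXE, ?_⟩
      have hfin : I.Finite := by
        rw [← encard_lt_top_iff]
        exact lt_of_le_of_lt hIr (by exact_mod_cast lt_top_iff_ne_top.mpr (by simp))
      have hfin' : Finite ↥I := hfin.to_subtype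
      have hσex : ∀ x : ↥I, ∃ s, s ≤ r + 1 ∧ g (chainE l hr0 s) = ↑x := by
        intro x
        obtain ⟨y, ⟨s, hs, rfl⟩, hgy⟩ := hIX x.2
        exact ⟨s, mem_Iic.1 hs, hgy⟩
      choose σ hσle hσx using hσex
      have hσinj : Function.Injective σ := by
        intro x y hxy
        apply Subtype.ext
        rw [← hσx x, ← hσx y, hxy]
      set ρ : ↥I → ℕ := fun x => {y : ↥I | σ y < σ x}.ncard with hρdef
      have hρσ : ∀ x, ρ x ≤ σ x := by
        intro x
        have h1 : {y : ↥I | σ y < σ x}.ncard = (σ '' {y : ↥I | σ y < σ x}).ncard :=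
          (Set.ncard_image_of_injective _ hσinj).symm
        have h2 : σ '' {y : ↥I | σ y < σ x} ⊆ ↑(Finset.range (σ x)) := by
          rintro _ ⟨y, hy, rfl⟩
          simpa [Finset.mem_range] using hy
        have h3 := Set.ncard_le_ncard h2 (Finset.range (σ x)).finite_toSet
        rw [Set.ncard_coe_finset, Finset.card_range] at h3
        simp only [hρdef]
        omega
      have hIncard : I.ncard ≤ r := by
        rw [← Nat.cast_le (α := ℕ∞), hfin.cast_ncard_eq]
        exact hIr
      have hρr : ∀ x, ρ x < r := by
        intro x
        have hne : x ∉ {y : ↥I | σ y < σ x} := by simp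
        have h1 : (insert x {y : ↥I | σ y < σ x}).ncard = ρ x + 1 :=
          Set.ncard_insert_of_notMem hne (Set.toFinite _)
        have h2 : (insert x {y : ↥I | σ y < σ x}).ncard ≤ (univ : Set ↥I).ncard :=
          Set.ncard_le_ncard (subset_univ _) (Set.toFinite _)
        have h3 : (univ : Set ↥I).ncard = I.ncard := by
          rw [Set.ncard_univ, Nat.card_coe_set_eq]
        omega
      have hρmono : ∀ x y, σ x < σ y → ρ x < ρ y := by
        intro x y h
        apply Set.ncard_lt_ncard _ (Set.toFinite _)
        constructor
        · intro z hz
          exact lt_trans hz h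
        · intro hsub
          have hx : x ∈ {z : ↥I | σ z < σ y} := h
          have := hsub hx
          simp at this
      have hφbound : ∀ x : ↥I, max (ρ x) (σ x - 2) < r := by
        intro x
        have h1 := hρr x
        have h2 := hσle x
        refine Nat.max_lt.mpr ⟨h1, by omega⟩
      refine ⟨fun x => ⟨max (ρ x) (σ x - 2), hφbound x⟩, ?_, ?_⟩
      · intro x y hxy
        by_contra hne
        have hσne : σ x ≠ σ y := fun h => hne (hσinj h)
        have hval : max (ρ x) (σ x - 2) = max (ρ y) (σ y - 2) := by
          simpa using congrArg Fin.val hxy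
        rcases Nat.lt_or_ge (σ x) (σ y) with h | h
        · have hm := hρmono x y h
          have h1 := hσle x
          have h2 := hσle y
          rcases max_cases (ρ x) (σ x - 2) with ⟨e1, e2⟩ | ⟨e1, e2⟩ <;>
            rcases max_cases (ρ y) (σ y - 2) with ⟨e3, e4⟩ | ⟨e3, e4⟩ <;> omega
        · have h' : σ y < σ x := lt_of_le_of_ne h (hσne.symm)
          have hm := hρmono y x h'
          have h1 := hσle x
          have h2 := hσle y
          rcases max_cases (ρ x) (σ x - 2) with ⟨e1, e2⟩ | ⟨e1, e2⟩ <;>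
            rcases max_cases (ρ y) (σ y - 2) with ⟨e3, e4⟩ | ⟨e3, e4⟩ <;> omega
      · intro x
        refine ⟨chainE l hr0 (σ x), ⟨?_, ?_⟩, hσx x⟩
        · refine hF1 _ _ ?_
          simp only []
          exact Nat.max_le.mpr ⟨hρσ x, by omega⟩
        · refine hF2 _ _ ?_ (hσle x)
          simp only []
          have := Nat.le_max_right (ρ x) (σ x - 2)
          omega

end Final


/-- A vertically 3-connected lattice path matroid of rank `r ≥ 3` has a minor isomorphic
to the uniform matroid `U_{r, r+2}`. -/
theorem exists_unif_minor_of_verticallyThreeConnected (M : Matroid α) (r : ℕ) (hr : 3 ≤ r)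
    (hrank : eRank₀ M = (r : ℕ∞)) (hlp : LatticePath M)
    (h3 : VerticallyThreeConnected M) :
    ∃ N : Matroid α, IsMinorOf N M ∧ IsUnifIso r (r + 2) N := by
  obtain ⟨r', m, g, l, u, hg, hgE, hl, hu, hbd, hpres⟩ := hlp
  have hrank' : eRank₀ M = (r' : ℕ∞) := aux_eRank hg hgE hl hbd hpres
  have hrr : r' = r := by rw [hrank'] at hrank; exact_mod_cast hrank
  subst hrr
  exact aux_final hg hgE hl hu hbd hpres h3 hr
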